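/- The incidence hypergraph Ω with vertex set {T_v, F_v}, edge set {T_e, F_e}, and exactly five incidences — one 'true' incidence between T_v and T_e, and one additional incidence between each of the four vertex-edge pairs (T_v,T_e), (T_v,F_e), (F_v,T_e), (F_v,F_e) — together with the monomorphism t : 1_R → Ω selecting the true vertex, true edge, and true incidence, is a subobject classifier for the category R of incidence hypergraphs: for every monomorphism φ : H → G there is a unique morphism χ : G → Ω such that H is the pullback of t along χ. -/

import Mathlib

open CategoryTheory Limits

/-- An incidence hypergraph: vertices, edges, incidences, and two structure maps. -/
structure IncHG : Type 1 where
  V : Type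
  E : Type
  I : Type
  vmap : I → V
  emap : I → E

/-- A homomorphism of incidence hypergraphs. -/
@[ext]
structure IncHG.Hom (G H : IncHG) where
  fV : G.V → H.V
  fE : G.E → H.E
  fI : G.I → H.I
  comm_v : ∀ i, H.vmap (fI i) = fV (G.vmap i)
  comm_e : ∀ i, H.emap (fI i) = fE (G.emap i)

instance : Category IncHG where
  Hom := IncHG.Hom
  id G := ⟨id, id, id, fun _ => rfl, fun _ => rfl⟩
  comp f g := ⟨g.fV ∘ f.fV, g.fE ∘ f.fE, g.fI ∘ f.fI,
    fun i => by simp [IncHG.Hom.comm_v], fun i => by simp [IncHG.Hom.comm_e]⟩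
  id_comp f := rfl
  comp_id f := rfl
  assoc f g h := rfl

/-- The terminal incidence hypergraph: one vertex, one edge, one incidence. -/
def unitIH : IncHG := ⟨PUnit, PUnit, PUnit, fun _ => PUnit.unit, fun _ => PUnit.unit⟩

/-- The subobject classifier candidate `Ω`: two vertices (`true` = T_v, `false` = F_v),
two edges, and five incidences: `none` is the 'true' incidence between the true vertex
and true edge, and `some (v, e)` is the additional ('false') incidence between the
vertex `v` and edge `e`, one for each of the four vertex-edge pairs. -/
def OmegaIH : IncHG where
  V := Bool
  E := Bool
  I := Option (Bool × Bool)
  vmap := fun i => match i with | none => true | some p => p.1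
  emap := fun i => match i with | none => true | some p => p.2

/-- The 'true' morphism, selecting the true vertex, true edge, and true incidence. -/
def truthIH : unitIH ⟶ OmegaIH :=
  ⟨fun _ => true, fun _ => true, fun _ => none, fun _ => rfl, fun _ => rfl⟩

/-- The unique morphism to the terminal object. -/
def toUnitIH (H : IncHG) : H ⟶ unitIH :=
  ⟨fun _ => PUnit.unit, fun _ => PUnit.unit, fun _ => PUnit.unit,
    fun _ => rfl, fun _ => rfl⟩

/-! ### Auxiliary material -/

section Aux

open Classical

@[simp] lemma IncHG.comp_fV {A B C : IncHG} (f : A ⟶ B) (g : B ⟶ C) :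
    (f ≫ g).fV = g.fV ∘ f.fV := rfl
@[simp] lemma IncHG.comp_fE {A B C : IncHG} (f : A ⟶ B) (g : B ⟶ C) :
    (f ≫ g).fE = g.fE ∘ f.fE := rfl
@[simp] lemma IncHG.comp_fI {A B C : IncHG} (f : A ⟶ B) (g : B ⟶ C) :
    (f ≫ g).fI = g.fI ∘ f.fI := rfl

/-- Any two morphisms into the terminal object agree. -/
lemma unit_hom_ext {X : IncHG} (f g : X ⟶ unitIH) : f = g := by
  apply IncHG.Hom.ext <;> funext x <;> rfl

/-- One-vertex hypergraph. -/
def vtxIH : IncHG := ⟨PUnit, PEmpty, PEmpty, PEmpty.elim, PEmpty.elim⟩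
/-- One-edge hypergraph. -/
def edgIH : IncHG := ⟨PEmpty, PUnit, PEmpty, PEmpty.elim, PEmpty.elim⟩

def vtxHom (H : IncHG) (v : H.V) : vtxIH ⟶ H :=
  ⟨fun _ => v, PEmpty.elim, PEmpty.elim, fun i => i.elim, fun i => i.elim⟩
def edgHom (H : IncHG) (e : H.E) : edgIH ⟶ H :=
  ⟨PEmpty.elim, fun _ => e, PEmpty.elim, fun i => i.elim, fun i => i.elim⟩
def incHom (H : IncHG) (j : H.I) : unitIH ⟶ H :=
  ⟨fun _ => H.vmap j, fun _ => H.emap j, fun _ => j, fun _ => rfl, fun _ => rfl⟩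

lemma mono_fV {G H : IncHG} (φ : H ⟶ G) [Mono φ] : Function.Injective φ.fV := by
  intro a b h
  have h2 : vtxHom H a ≫ φ = vtxHom H b ≫ φ := by
    apply IncHG.Hom.ext
    · funext x; exact h
    · funext x; exact x.elim
    · funext x; exact x.elim
  have := (cancel_mono φ).mp h2
  exact congrFun (congrArg IncHG.Hom.fV this) PUnit.unit

lemma mono_fE {G H : IncHG} (φ : H ⟶ G) [Mono φ] : Function.Injective φ.fE := by
  intro a b h
  have h2 : edgHom H a ≫ φ = edgHom H b ≫ φ := by
    apply IncHG.Hom.ext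
    · funext x; exact x.elim
    · funext x; exact h
    · funext x; exact x.elim
  have := (cancel_mono φ).mp h2
  exact congrFun (congrArg IncHG.Hom.fE this) PUnit.unit

lemma mono_fI {G H : IncHG} (φ : H ⟶ G) [Mono φ] : Function.Injective φ.fI := by
  intro a b h
  have h2 : incHom H a ≫ φ = incHom H b ≫ φ := by
    apply IncHG.Hom.ext
    · funext x
      show φ.fV (H.vmap a) = φ.fV (H.vmap b)
      rw [← φ.comm_v, ← φ.comm_v, h]
    · funext x
      show φ.fE (H.emap a) = φ.fE (H.emap b)
      rw [← φ.comm_e, ← φ.comm_e, h]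
    · funext x; exact h
  have := (cancel_mono φ).mp h2
  exact congrFun (congrArg IncHG.Hom.fI this) PUnit.unit

noncomputable def chiV {G H : IncHG} (φ : H ⟶ G) (v : G.V) : Bool :=
  if (∃ w, φ.fV w = v) then true else false
noncomputable def chiE {G H : IncHG} (φ : H ⟶ G) (e : G.E) : Bool :=
  if (∃ w, φ.fE w = e) then true else false
noncomputable def chiI {G H : IncHG} (φ : H ⟶ G) (i : G.I) : Option (Bool × Bool) :=
  if (∃ j, φ.fI j = i) then none else some (chiV φ (G.vmap i), chiE φ (G.emap i))

lemma chiV_true {G H : IncHG} (φ : H ⟶ G) {v : G.V} (h : ∃ w, φ.fV w = v) :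
    chiV φ v = true := if_pos h
lemma chiV_eq_true {G H : IncHG} (φ : H ⟶ G) {v : G.V} (h : chiV φ v = true) :
    ∃ w, φ.fV w = v := by
  by_contra hc; simp [chiV, if_neg hc] at h
lemma chiE_true {G H : IncHG} (φ : H ⟶ G) {e : G.E} (h : ∃ w, φ.fE w = e) :
    chiE φ e = true := if_pos h
lemma chiE_eq_true {G H : IncHG} (φ : H ⟶ G) {e : G.E} (h : chiE φ e = true) :
    ∃ w, φ.fE w = e := by
  by_contra hc; simp [chiE, if_neg hc] at h
lemma chiI_none {G H : IncHG} (φ : H ⟶ G) {i : G.I} (h : ∃ j, φ.fI j = i) :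
    chiI φ i = none := if_pos h
lemma chiI_eq_none {G H : IncHG} (φ : H ⟶ G) {i : G.I} (h : chiI φ i = none) :
    ∃ j, φ.fI j = i := by
  by_contra hc; simp [chiI, if_neg hc] at h

noncomputable def chi {G H : IncHG} (φ : H ⟶ G) : G ⟶ OmegaIH where
  fV := chiV φ
  fE := chiE φ
  fI := chiI φ
  comm_v := by
    intro i
    by_cases h : ∃ j, φ.fI j = i
    · rw [chiI_none φ h]
      obtain ⟨j, rfl⟩ := h
      show true = chiV φ (G.vmap (φ.fI j))
      rw [φ.comm_v]
      exact (chiV_true φ ⟨_, rfl⟩).symm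
    · show OmegaIH.vmap (chiI φ i) = _
      rw [chiI, if_neg h]
      rfl
  comm_e := by
    intro i
    by_cases h : ∃ j, φ.fI j = i
    · rw [chiI_none φ h]
      obtain ⟨j, rfl⟩ := h
      show true = chiE φ (G.emap (φ.fI j))
      rw [φ.comm_e]
      exact (chiE_true φ ⟨_, rfl⟩).symm
    · show OmegaIH.emap (chiI φ i) = _
      rw [chiI, if_neg h]
      rfl

lemma chi_comm {G H : IncHG} (φ : H ⟶ G) :
    φ ≫ chi φ = toUnitIH H ≫ truthIH := by
  apply IncHG.Hom.ext
  · funext v; exact chiV_true φ ⟨v, rfl⟩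
  · funext e; exact chiE_true φ ⟨e, rfl⟩
  · funext j; exact chiI_none φ ⟨j, rfl⟩

end Aux

/-- `Ω` with `truthIH` is a subobject classifier: every monomorphism `φ : H ⟶ G` admits
a unique characteristic morphism `χ : G ⟶ Ω` making `H` the pullback of `truthIH`
along `χ`. -/
theorem omegaIH_subobjectClassifier (G H : IncHG) (φ : H ⟶ G) [Mono φ] :
    ∃! χ : G ⟶ OmegaIH, IsPullback φ (toUnitIH H) χ truthIH := by
  classical
  have hV := mono_fV φ
  have hE := mono_fE φ
  have hI := mono_fI φ
  refine ⟨chi φ, ?_, ?_⟩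
  · -- chi φ gives a pullback square
    refine IsPullback.of_isLimit (c := PullbackCone.mk φ (toUnitIH H) (chi_comm φ)) ?_
    refine PullbackCone.IsLimit.mk _ ?_ ?_ ?_ ?_
    · -- lift
      intro s
      have hsV : ∀ x, ∃ w, φ.fV w = s.fst.fV x := by
        intro x
        apply chiV_eq_true φ
        have := congrFun (congrArg IncHG.Hom.fV s.condition) x
        exact this
      have hsE : ∀ x, ∃ w, φ.fE w = s.fst.fE x := by
        intro x
        apply chiE_eq_true φ
        exact congrFun (congrArg IncHG.Hom.fE s.condition) x
      have hsI : ∀ x, ∃ j, φ.fI j = s.fst.fI x := by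
        intro x
        apply chiI_eq_none φ
        exact congrFun (congrArg IncHG.Hom.fI s.condition) x
      refine ⟨fun x => (hsV x).choose, fun x => (hsE x).choose,
        fun x => (hsI x).choose, ?_, ?_⟩
      · intro x
        apply hV
        rw [(hsV (s.pt.vmap x)).choose_spec, ← φ.comm_v, (hsI x).choose_spec,
          ← s.fst.comm_v]
      · intro x
        apply hE
        rw [(hsE (s.pt.emap x)).choose_spec, ← φ.comm_e, (hsI x).choose_spec,
          ← s.fst.comm_e]
    · intro s
      apply IncHG.Hom.ext
      · funext x; exact (_ : ∃ w, φ.fV w = s.fst.fV x).choose_spec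
      · funext x; exact (_ : ∃ w, φ.fE w = s.fst.fE x).choose_spec
      · funext x; exact (_ : ∃ j, φ.fI j = s.fst.fI x).choose_spec
    · intro s; exact unit_hom_ext _ _
    · intro s m hm₁ _
      apply IncHG.Hom.ext
      · funext x
        apply hV
        have := congrFun (congrArg IncHG.Hom.fV hm₁) x
        rw [show (m ≫ φ).fV x = φ.fV (m.fV x) from rfl] at this
        rw [this]
        exact ((_ : ∃ w, φ.fV w = s.fst.fV x).choose_spec).symm
      · funext x
        apply hE
        have := congrFun (congrArg IncHG.Hom.fE hm₁) x
        rw [show (m ≫ φ).fE x = φ.fE (m.fE x) from rfl] at this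
        rw [this]
        exact ((_ : ∃ w, φ.fE w = s.fst.fE x).choose_spec).symm
      · funext x
        apply hI
        have := congrFun (congrArg IncHG.Hom.fI hm₁) x
        rw [show (m ≫ φ).fI x = φ.fI (m.fI x) from rfl] at this
        rw [this]
        exact ((_ : ∃ j, φ.fI j = s.fst.fI x).choose_spec).symm
  · -- uniqueness
    intro χ' hp
    have hw := hp.w
    -- vertex characterization
    have hvchar : ∀ v : G.V, χ'.fV v = true ↔ ∃ w, φ.fV w = v := by
      intro v
      constructor
      · intro hv
        have hc : vtxHom G v ≫ χ' = toUnitIH vtxIH ≫ truthIH := by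
          apply IncHG.Hom.ext
          · funext x; exact hv
          · funext x; exact x.elim
          · funext x; exact x.elim
        have hl := hp.lift_fst (vtxHom G v) (toUnitIH vtxIH) hc
        exact ⟨(hp.lift (vtxHom G v) (toUnitIH vtxIH) hc).fV PUnit.unit,
          congrFun (congrArg IncHG.Hom.fV hl) PUnit.unit⟩
      · rintro ⟨w, rfl⟩
        exact congrFun (congrArg IncHG.Hom.fV hw) w
    have hechar : ∀ e : G.E, χ'.fE e = true ↔ ∃ w, φ.fE w = e := by
      intro e
      constructor
      · intro hv
        have hc : edgHom G e ≫ χ' = toUnitIH edgIH ≫ truthIH := by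
          apply IncHG.Hom.ext
          · funext x; exact x.elim
          · funext x; exact hv
          · funext x; exact x.elim
        have hl := hp.lift_fst (edgHom G e) (toUnitIH edgIH) hc
        exact ⟨(hp.lift (edgHom G e) (toUnitIH edgIH) hc).fE PUnit.unit,
          congrFun (congrArg IncHG.Hom.fE hl) PUnit.unit⟩
      · rintro ⟨w, rfl⟩
        exact congrFun (congrArg IncHG.Hom.fE hw) w
    have hichar : ∀ i : G.I, χ'.fI i = none ↔ ∃ j, φ.fI j = i := by
      intro i
      constructor
      · intro hv
        have hc : incHom G i ≫ χ' = toUnitIH unitIH ≫ truthIH := by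
          apply IncHG.Hom.ext
          · funext x
            show χ'.fV (G.vmap i) = true
            have := χ'.comm_v i
            rw [hv] at this
            exact this.symm
          · funext x
            show χ'.fE (G.emap i) = true
            have := χ'.comm_e i
            rw [hv] at this
            exact this.symm
          · funext x; exact hv
        have hl := hp.lift_fst (incHom G i) (toUnitIH unitIH) hc
        exact ⟨(hp.lift (incHom G i) (toUnitIH unitIH) hc).fI PUnit.unit,
          congrFun (congrArg IncHG.Hom.fI hl) PUnit.unit⟩
      · rintro ⟨j, rfl⟩
        exact congrFun (congrArg IncHG.Hom.fI hw) j
    have hVeq : χ'.fV = chiV φ := by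
      funext v
      by_cases h : ∃ w, φ.fV w = v
      · rw [chiV_true φ h, (hvchar v).mpr h]
      · rw [chiV, if_neg h]
        cases hb : χ'.fV v
        · rfl
        · exact absurd ((hvchar v).mp hb) h
    have hEeq : χ'.fE = chiE φ := by
      funext e
      by_cases h : ∃ w, φ.fE w = e
      · rw [chiE_true φ h, (hechar e).mpr h]
      · rw [chiE, if_neg h]
        cases hb : χ'.fE e
        · rfl
        · exact absurd ((hechar e).mp hb) h
    apply IncHG.Hom.ext
    · exact hVeq
    · exact hEeq
    · funext i
      show χ'.fI i = chiI φ i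
      by_cases h : ∃ j, φ.fI j = i
      · rw [(hichar i).mpr h, chiI_none φ h]
      · rw [chiI, if_neg h]
        cases hb : χ'.fI i with
        | none => exact absurd ((hichar i).mp hb) h
        | some p =>
          have h1 := χ'.comm_v i
          have h2 := χ'.comm_e i
          rw [hb] at h1 h2
          have : p = (χ'.fV (G.vmap i), χ'.fE (G.emap i)) := Prod.ext h1 h2
          rw [this, hVeq, hEeq]
          rfl
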